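/- Let d, n₁, n₂ be natural numbers. For each i ∈ {1, …, d}, let W_i be an n₁×α_i complex matrix and let R_i be a β_i×n₂ complex matrix, where α_i, β_i are arbitrary natural numbers. Then the maximum, over all choices of complex matrices P_i of size α_i×β_i for i ∈ {1, …, d}, of rank(∑_{i=1}^d W_i · P_i · R_i) equals the minimum, over all subsets S ⊆ {1, …, d}, of (the rank of the matrix W_S obtained by horizontally concatenating the matrices W_i for i ∈ S) plus (the rank of the matrix R_{complement} obtained by vertically stacking the matrices R_j for j ∈ {1, …, d} \ S). -/

import Mathlib

set_option linter.unusedSectionVars false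
set_option maxHeartbeats 1000000

open Module Matrix LinearMap Submodule

namespace GRaux

variable {K : Type*} [Field K]

/-! ### Elementary linear algebra helpers -/

lemma rank_eq_finrank_range {m n : Type*} [Fintype n] (M : Matrix m n K) :
    M.rank = finrank K ↥(LinearMap.range M.mulVecLin) := rfl

lemma finrank_map_add_finrank_inf_ker {V V' : Type*} [AddCommGroup V] [Module K V]
    [AddCommGroup V'] [Module K V'] [FiniteDimensional K V] (f : V →ₗ[K] V')
    (Q : Submodule K V) :
    finrank K (Q.map f) + finrank K (Q ⊓ ker f : Submodule K V) = finrank K Q := by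
  have h := LinearMap.finrank_range_add_finrank_ker (f.domRestrict Q)
  rw [LinearMap.range_domRestrict] at h
  have hk : finrank K (ker (f.domRestrict Q)) = finrank K (Q ⊓ ker f : Submodule K V) := by
    rw [LinearMap.ker_domRestrict]
    have e := Submodule.comapSubtypeEquivOfLe (inf_le_left (a := Q) (b := ker f))
    have h2 : Submodule.comap Q.subtype (Q ⊓ ker f) = Submodule.comap Q.subtype (ker f) := by
      simp [Submodule.comap_inf, Submodule.comap_subtype_self]
    rw [← h2]
    exact (LinearEquiv.finrank_eq e)
  omega

lemma finrank_map_of_ker_span {V V' : Type*} [AddCommGroup V] [Module K V]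
    [AddCommGroup V'] [Module K V'] [FiniteDimensional K V] {f : V →ₗ[K] V'} {x : V}
    (hker : ker f = Submodule.span K {x}) (Q : Submodule K V) :
    finrank K (Q.map f) ≤ finrank K Q ∧ finrank K Q ≤ finrank K (Q.map f) + 1 ∧
      (x ∉ Q → finrank K (Q.map f) = finrank K Q) := by
  have h := finrank_map_add_finrank_inf_ker f Q
  rw [hker] at h
  refine ⟨by omega, ?_, ?_⟩
  · have h1 : finrank K (Q ⊓ Submodule.span K {x} : Submodule K V) ≤ 1 := by
      rcases eq_or_ne x 0 with rfl | hx0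
      · have hb : Q ⊓ Submodule.span K {(0:V)} = ⊥ := by simp
        rw [hb]; simp
      · calc finrank K (Q ⊓ Submodule.span K {x} : Submodule K V)
            ≤ finrank K (Submodule.span K {x}) := Submodule.finrank_mono inf_le_right
          _ = 1 := finrank_span_singleton hx0
    omega
  · intro hx
    have h0 : Q ⊓ Submodule.span K {x} = ⊥ := by
      rw [eq_bot_iff]
      rintro v ⟨hvQ, hvx⟩
      rw [SetLike.mem_coe, Submodule.mem_span_singleton] at hvx
      obtain ⟨c, rfl⟩ := hvx
      rcases eq_or_ne c 0 with rfl | hc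
      · simp
      · exact absurd (by simpa [hc] using Q.smul_mem c⁻¹ hvQ) hx
    rw [h0] at h
    simpa using h

/-! ### The elimination matrix -/

noncomputable def elim {m : ℕ} (x : Fin (m+1) → K) (k : Fin (m+1)) :
    Matrix (Fin m) (Fin (m+1)) K :=
  Matrix.of fun j l => (if l = k.succAbove j then 1 else 0) +
    (if l = k then -(x (k.succAbove j) / x k) else 0)

lemma elim_mulVec {m : ℕ} (x : Fin (m+1) → K) (k : Fin (m+1))
    (v : Fin (m+1) → K) (j : Fin m) :
    (elim x k).mulVec v j = v (k.succAbove j) - x (k.succAbove j) / x k * v k := by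
  classical
  unfold elim
  simp only [Matrix.mulVec, dotProduct, Matrix.of_apply, add_mul, ite_mul, one_mul,
    zero_mul, Finset.sum_add_distrib, Finset.sum_ite_eq', Finset.mem_univ, if_true]
  ring

lemma ker_elim {m : ℕ} (x : Fin (m+1) → K) (k : Fin (m+1))
    (hk : x k ≠ 0) :
    LinearMap.ker (elim x k).mulVecLin = Submodule.span K {x} := by
  ext v
  rw [LinearMap.mem_ker, Submodule.mem_span_singleton]
  constructor
  · intro hv
    refine ⟨v k / x k, ?_⟩
    funext l
    rcases eq_or_ne l k with rfl | hl
    · simp [div_mul_comm, div_self hk]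
    · obtain ⟨j, hj⟩ := Fin.exists_succAbove_eq hl
      have h1 := congrFun hv j
      rw [Matrix.mulVecLin_apply, elim_mulVec] at h1
      have h2 : v (k.succAbove j) = x (k.succAbove j) / x k * v k := by
        have h3 : v (k.succAbove j) - x (k.succAbove j) / x k * v k = 0 := h1
        linear_combination h3
      rw [← hj]
      simp only [Pi.smul_apply, smul_eq_mul, h2]
      ring
  · rintro ⟨c, rfl⟩
    funext j
    rw [Matrix.mulVecLin_apply, elim_mulVec]
    simp only [Pi.smul_apply, smul_eq_mul, Pi.zero_apply]
    field_simp
    ring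

/-! ### Ranges of concatenated matrices -/

lemma range_concat {d : ℕ} {m : Type*} [Fintype m] {α : Fin d → ℕ}
    (W : ∀ i, Matrix m (Fin (α i)) K) (S : Finset (Fin d)) :
    LinearMap.range (Matrix.of fun (a : m) (c : (i : S) × Fin (α i.1)) =>
        W c.1 a c.2).mulVecLin
      = S.sup (fun i => LinearMap.range (W i).mulVecLin) := by
  classical
  apply le_antisymm
  · rintro w ⟨v, rfl⟩
    have hv : (Matrix.of fun (a : m) (c : (i : S) × Fin (α i.1)) =>
        W c.1 a c.2).mulVec v = ∑ i : S, (W i.1).mulVec (fun t => v ⟨i, t⟩) := by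
      funext a
      simp only [Matrix.mulVec, dotProduct, Matrix.of_apply, Finset.sum_apply]
      rw [← Finset.univ_sigma_univ, Finset.sum_sigma]
    rw [Matrix.mulVecLin_apply, hv]
    apply Submodule.sum_mem
    intro i _
    exact Finset.le_sup (f := fun i => LinearMap.range (W i).mulVecLin) i.2
      ⟨(fun t => v ⟨i, t⟩), rfl⟩
  · apply Finset.sup_le
    intro i hi
    rintro w ⟨ξ, rfl⟩
    refine ⟨fun c => if h : c.1 = (⟨i, hi⟩ : S) then ξ (Fin.cast (by rw [h]) c.2) else 0, ?_⟩
    rw [Matrix.mulVecLin_apply, Matrix.mulVecLin_apply]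
    funext a
    simp only [Matrix.mulVec, dotProduct, Matrix.of_apply]
    rw [← Finset.univ_sigma_univ, Finset.sum_sigma]
    rw [Finset.sum_eq_single (⟨i, hi⟩ : S)]
    · simp
    · intro j _ hj
      apply Finset.sum_eq_zero
      intro t _
      rw [dif_neg hj, mul_zero]
    · intro h; exact absurd (Finset.mem_univ _) h

lemma sum_mulVec {d : ℕ} {m n : Type*} [Fintype n] (M : Fin d → Matrix m n K)
    (S : Finset (Fin d)) (v : n → K) :
    (∑ i ∈ S, M i).mulVec v = ∑ i ∈ S, (M i).mulVec v := by
  funext a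
  simp only [Matrix.mulVec, dotProduct, Finset.sum_apply, Matrix.sum_apply,
    Finset.sum_mul]
  rw [Finset.sum_comm]

lemma rank_add_le'' {m n : ℕ} (A B : Matrix (Fin m) (Fin n) K) :
    (A + B).rank ≤ A.rank + B.rank := by
  have hle : LinearMap.range (A + B).mulVecLin
      ≤ LinearMap.range A.mulVecLin ⊔ LinearMap.range B.mulVecLin := by
    rintro _ ⟨v, rfl⟩
    rw [Matrix.mulVecLin_apply, Matrix.add_mulVec]
    exact Submodule.add_mem _ (Submodule.mem_sup_left ⟨v, rfl⟩)
      (Submodule.mem_sup_right ⟨v, rfl⟩)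
  rw [rank_eq_finrank_range, rank_eq_finrank_range, rank_eq_finrank_range]
  calc finrank K ↥(LinearMap.range (A + B).mulVecLin)
      ≤ finrank K ↥(LinearMap.range A.mulVecLin ⊔ LinearMap.range B.mulVecLin) :=
        Submodule.finrank_mono hle
    _ ≤ _ := Submodule.finrank_add_le_finrank_add_finrank _ _

lemma vecMulVec_mulVec {n₁ n₂ : ℕ} (x : Fin n₁ → K) (y : Fin n₂ → K) (w : Fin n₂ → K) :
    (vecMulVec x y).mulVec w = (y ⬝ᵥ w) • x := by
  funext a
  simp only [Matrix.mulVec, dotProduct, vecMulVec_apply, Pi.smul_apply, smul_eq_mul,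
    Finset.sum_mul]
  congr 1; funext b; ring

lemma mul_vecMulVec_mul {n₁ n₂ a b : ℕ} (Wm : Matrix (Fin n₁) (Fin a) K)
    (Rm : Matrix (Fin b) (Fin n₂) K) (ξ : Fin a → K) (η : Fin b → K) :
    Wm * vecMulVec ξ η * Rm = vecMulVec (Wm.mulVec ξ) (Matrix.vecMul η Rm) := by
  rw [vecMulVec_eq (Fin 1), vecMulVec_eq (Fin 1), Matrix.replicateCol_mulVec, Matrix.replicateRow_vecMul]
  rw [Matrix.mul_assoc, Matrix.mul_assoc, Matrix.mul_assoc]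

lemma map_finset_sup {V₁ V₂ : Type*} [AddCommGroup V₁] [Module K V₁]
    [AddCommGroup V₂] [Module K V₂] (f : V₁ →ₗ[K] V₂) {ι : Type*} (S : Finset ι)
    (U : ι → Submodule K V₁) :
    (S.sup U).map f = S.sup (fun i => (U i).map f) := by
  classical
  induction S using Finset.cons_induction with
  | empty => simp
  | cons i S hi ih => simp [Finset.sup_cons, Submodule.map_sup, ih]

/-! ### The perturbation lemma -/

lemma perturb {n₁ n₂ m₁ m₂ : ℕ} (T : Matrix (Fin n₁) (Fin n₂) K)
    (Φ : Matrix (Fin m₁) (Fin n₁) K) (Ψ : Matrix (Fin n₂) (Fin m₂) K)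
    {x : Fin n₁ → K} {y : Fin n₂ → K} (hx : x ≠ 0) (hy : y ≠ 0)
    (hker : LinearMap.ker Φ.mulVecLin = Submodule.span K {x})
    (hΨ : Matrix.vecMul y Ψ = 0) :
    ∃ c : K, (Φ * T * Ψ).rank + 1 ≤ (T + c • vecMulVec x y).rank := by
  classical
  set s := (Φ * T * Ψ).rank with hs
  have hbb : ∃ u : Fin s → (Fin m₁ → K), LinearIndependent K u ∧
      ∀ j, u j ∈ LinearMap.range (Φ * T * Ψ).mulVecLin := by
    have : FiniteDimensional K ↥(LinearMap.range (Φ * T * Ψ).mulVecLin) := inferInstance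
    let bb := finBasis K ↥(LinearMap.range (Φ * T * Ψ).mulVecLin)
    refine ⟨fun j => (bb (Fin.cast (by rw [hs, rank_eq_finrank_range]) j) : Fin m₁ → K), ?_, ?_⟩
    · have h1 : LinearIndependent K (fun j : Fin (finrank K ↥(LinearMap.range
          (Φ * T * Ψ).mulVecLin)) => (bb j : Fin m₁ → K)) :=
        bb.linearIndependent.map' (Submodule.subtype _) (ker_subtype _)
      exact h1.comp _ (Fin.cast_injective _)
    · intro j; exact (bb _).2
  obtain ⟨u, hu_li, hu_mem⟩ := hbb
  choose v hv using fun j => hu_mem j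
  set w : Fin s → (Fin n₂ → K) := fun j => Ψ.mulVec (v j) with hw
  set z : Fin s → (Fin n₁ → K) := fun j => T.mulVec (w j) with hz
  have hΦz : ∀ j, Φ.mulVec (z j) = u j := by
    intro j
    rw [hz, hw]
    calc Φ.mulVec (T.mulVec (Ψ.mulVec (v j)))
        = (Φ * T).mulVec (Ψ.mulVec (v j)) := mulVec_mulVec _ _ _
      _ = ((Φ * T) * Ψ).mulVec (v j) := mulVec_mulVec _ _ _
      _ = u j := by rw [← Matrix.mulVecLin_apply]; exact hv j
  have hz_li : LinearIndependent K z := by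
    apply LinearIndependent.of_comp Φ.mulVecLin
    have : (Φ.mulVecLin ∘ z) = u := by funext j; simp [Matrix.mulVecLin_apply, hΦz j]
    rw [this]; exact hu_li
  have hyw : ∀ j, y ⬝ᵥ w j = 0 := by
    intro j
    rw [hw, dotProduct_mulVec, hΨ, zero_dotProduct]
  have hΦx : Φ.mulVec x = 0 := by
    have : x ∈ ker Φ.mulVecLin := by rw [hker]; exact Submodule.mem_span_singleton_self x
    simpa [Matrix.mulVecLin_apply] using this
  have hx_notin : x ∉ Submodule.span K (Set.range z) := by
    intro hmem
    rw [mem_span_range_iff_exists_fun] at hmem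
    obtain ⟨aa, ha⟩ := hmem
    have h0 : ∑ j, aa j • u j = 0 := by
      have := congrArg (fun t => Φ.mulVecLin t) ha
      simpa [map_sum, Matrix.mulVecLin_apply, hΦz, hΦx] using this
    have hz0 : ∀ j, aa j = 0 := Fintype.linearIndependent_iff.1 hu_li aa h0
    apply hx
    rw [← ha]
    simp [hz0]
  obtain ⟨k, hk⟩ := Function.ne_iff.1 hy
  set v₀ : Fin n₂ → K := Pi.single k 1 with hv₀
  have hg : y ⬝ᵥ v₀ = y k := by
    simp [hv₀, dotProduct, Pi.single_apply]
  have hyv₀ : y ⬝ᵥ v₀ ≠ 0 := by rw [hg]; simpa using hk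
  have hchoice : ∃ c : K, T.mulVec v₀ + (c * (y ⬝ᵥ v₀)) • x ∉
      Submodule.span K (Set.range z) := by
    by_cases hmem : T.mulVec v₀ ∈ Submodule.span K (Set.range z)
    · refine ⟨(y ⬝ᵥ v₀)⁻¹, ?_⟩
      rw [inv_mul_cancel₀ hyv₀, one_smul]
      intro hmem2
      exact hx_notin (by simpa using Submodule.sub_mem _ hmem2 hmem)
    · exact ⟨0, by simpa using hmem⟩
  obtain ⟨c, hc⟩ := hchoice
  refine ⟨c, ?_⟩
  set M := T + c • vecMulVec x y with hM
  have hMz : ∀ j, M.mulVec (w j) = z j := by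
    intro j
    rw [hM, Matrix.add_mulVec, Matrix.smul_mulVec, vecMulVec_mulVec, hyw j]
    simp [hz]
  have hMv₀ : M.mulVec v₀ = T.mulVec v₀ + (c * (y ⬝ᵥ v₀)) • x := by
    rw [hM, Matrix.add_mulVec, Matrix.smul_mulVec, vecMulVec_mulVec]
    rw [smul_smul]
  have hli : LinearIndependent K (Fin.cons (M.mulVec v₀) z : Fin (s+1) → (Fin n₁ → K)) := by
    rw [linearIndependent_fin_cons]
    exact ⟨hz_li, by rw [hMv₀]; exact hc⟩
  have hsub : Submodule.span K (Set.range (Fin.cons (M.mulVec v₀) z : Fin (s+1) → _))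
      ≤ LinearMap.range M.mulVecLin := by
    rw [Submodule.span_le]
    rintro _ ⟨j, rfl⟩
    refine Fin.cases ?_ ?_ j
    · exact ⟨v₀, rfl⟩
    · intro j'
      simp only [Fin.cons_succ]
      exact ⟨w j', (hMz j')⟩
  calc s + 1 = finrank K ↥(Submodule.span K (Set.range (Fin.cons (M.mulVec v₀) z
        : Fin (s+1) → _))) := by rw [finrank_span_eq_card hli, Fintype.card_fin]
    _ ≤ finrank K ↥(LinearMap.range M.mulVecLin) := Submodule.finrank_mono hsub
    _ = M.rank := (rank_eq_finrank_range M).symm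

/-! ### The selection lemma -/

section Selection
variable {V₁ V₂ : Type*} [AddCommGroup V₁] [Module K V₁]
  [AddCommGroup V₂] [Module K V₂]
variable [FiniteDimensional K V₁] [FiniteDimensional K V₂]
variable {d : ℕ} {U : Fin d → Submodule K V₁} {B : Fin d → Submodule K V₂} {r : ℕ}

/-- The min-max objective. -/
noncomputable def fS (U : Fin d → Submodule K V₁) (B : Fin d → Submodule K V₂)
    (S : Finset (Fin d)) : ℕ :=
  finrank K ↥(S.sup U) + finrank K ↥(Sᶜ.sup B)

lemma fS_def (S : Finset (Fin d)) :
    fS U B S = finrank K ↥(S.sup U) + finrank K ↥(Sᶜ.sup B) := rfl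

lemma tight_lattice (hmin : ∀ S, r ≤ fS U B S) {S T : Finset (Fin d)}
    (hS : fS U B S = r) (hT : fS U B T = r) :
    fS U B (S ∩ T) = r ∧ fS U B (S ∪ T) = r ∧
      S.sup U ⊓ T.sup U = (S ∩ T).sup U ∧
      (Sᶜ.sup B) ⊓ (Tᶜ.sup B) = ((S ∪ T)ᶜ).sup B := by
  classical
  have hUu : (S ∪ T).sup U = S.sup U ⊔ T.sup U := Finset.sup_union
  have hBu : ((S ∩ T)ᶜ).sup B = Sᶜ.sup B ⊔ Tᶜ.sup B := by
    rw [Finset.compl_inter]; exact Finset.sup_union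
  have e1 : finrank K ↥((S ∪ T).sup U) + finrank K (S.sup U ⊓ T.sup U : Submodule K V₁)
      = finrank K ↥(S.sup U) + finrank K ↥(T.sup U) := by
    rw [hUu]; exact Submodule.finrank_sup_add_finrank_inf_eq _ _
  have e2 : finrank K ↥(((S ∩ T)ᶜ).sup B) + finrank K (Sᶜ.sup B ⊓ Tᶜ.sup B : Submodule K V₂)
      = finrank K ↥(Sᶜ.sup B) + finrank K ↥(Tᶜ.sup B) := by
    rw [hBu]; exact Submodule.finrank_sup_add_finrank_inf_eq _ _
  have hi : (S ∩ T).sup U ≤ S.sup U ⊓ T.sup U :=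
    le_inf (Finset.sup_mono Finset.inter_subset_left)
      (Finset.sup_mono Finset.inter_subset_right)
  have hj : ((S ∪ T)ᶜ).sup B ≤ Sᶜ.sup B ⊓ Tᶜ.sup B := by
    rw [Finset.compl_union]
    exact le_inf (Finset.sup_mono Finset.inter_subset_left)
      (Finset.sup_mono Finset.inter_subset_right)
  have mi : finrank K ↥((S ∩ T).sup U) ≤ finrank K (S.sup U ⊓ T.sup U : Submodule K V₁) :=
    Submodule.finrank_mono hi
  have mj : finrank K ↥(((S ∪ T)ᶜ).sup B) ≤ finrank K (Sᶜ.sup B ⊓ Tᶜ.sup B : Submodule K V₂) :=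
    Submodule.finrank_mono hj
  have h1 := hmin (S ∩ T)
  have h2 := hmin (S ∪ T)
  simp only [fS] at hS hT h1 h2 ⊢
  have c3 : finrank K (S.sup U ⊓ T.sup U : Submodule K V₁) ≤ finrank K ↥((S ∩ T).sup U) := by
    omega
  have c4 : finrank K (Sᶜ.sup B ⊓ Tᶜ.sup B : Submodule K V₂) ≤
      finrank K ↥(((S ∪ T)ᶜ).sup B) := by omega
  exact ⟨by omega, by omega, (Submodule.eq_of_le_of_finrank_le hi c3).symm,
    (Submodule.eq_of_le_of_finrank_le hj c4).symm⟩

lemma sup_tight (hmin : ∀ S, r ≤ fS U B S) (𝒮 : Finset (Finset (Fin d))) (hne : 𝒮.Nonempty)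
    (h : ∀ S ∈ 𝒮, fS U B S = r) : fS U B (𝒮.sup _root_.id) = r := by
  classical
  induction hne using Finset.Nonempty.cons_induction with
  | singleton S => simpa using h S (by simp)
  | cons S 𝒮 hS hne ih =>
      rw [Finset.sup_cons]
      have h1 : fS U B (𝒮.sup _root_.id) = r := ih (fun T hT => h T (by simp [hT]))
      have h2 : fS U B S = r := h S (by simp)
      have := (tight_lattice hmin h2 h1).2.1
      rwa [← Finset.sup_eq_union] at this

lemma inf_tight (hmin : ∀ S, r ≤ fS U B S) (𝒮 : Finset (Finset (Fin d))) (hne : 𝒮.Nonempty)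
    (h : ∀ S ∈ 𝒮, fS U B S = r) : fS U B (𝒮.inf _root_.id) = r := by
  classical
  induction hne using Finset.Nonempty.cons_induction with
  | singleton S => simpa using h S (by simp)
  | cons S 𝒮 hS hne ih =>
      rw [Finset.inf_cons]
      have h1 : fS U B (𝒮.inf _root_.id) = r := ih (fun T hT => h T (by simp [hT]))
      have h2 : fS U B S = r := h S (by simp)
      have := (tight_lattice hmin h2 h1).1
      rwa [← Finset.inf_eq_inter] at this
lemma selection (hmin : ∀ S, r ≤ fS U B S) {S₀ : Finset (Fin d)} (hS₀ : fS U B S₀ = r)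
    (hr : 1 ≤ r) :
    ∃ (i : Fin d) (x : V₁) (y : V₂), x ∈ U i ∧ y ∈ B i ∧ x ≠ 0 ∧ y ≠ 0 ∧
      ∀ S, fS U B S = r → x ∉ S.sup U ∨ y ∉ Sᶜ.sup B := by
  classical
  by_contra hcon
  push_neg at hcon
  -- the union of all tight sets avoiding i, and intersection of all tight sets containing i
  set Tneg : Fin d → Finset (Fin d) :=
    fun i => (Finset.univ.filter (fun S => fS U B S = r ∧ i ∉ S)).sup _root_.id with hTneg_def
  set Tpos : Fin d → Finset (Fin d) :=
    fun i => (Finset.univ.filter (fun S => fS U B S = r ∧ i ∈ S)).inf _root_.id with hTpos_def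
  have hTneg_sub : ∀ i S, fS U B S = r → i ∉ S → S ⊆ Tneg i := by
    intro i S hS hiS
    have hmem : S ∈ Finset.univ.filter (fun S => fS U B S = r ∧ i ∉ S) :=
      Finset.mem_filter.2 ⟨Finset.mem_univ _, hS, hiS⟩
    exact Finset.le_sup (f := _root_.id) hmem
  have hTneg_not : ∀ i, i ∉ Tneg i := by
    intro i hi
    rw [hTneg_def] at hi
    simp only [Finset.mem_sup, Finset.mem_filter, Finset.mem_univ, true_and, _root_.id] at hi
    obtain ⟨S, ⟨_, hiS⟩, hmem⟩ := hi
    exact hiS hmem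
  have hTpos_sub : ∀ i S, fS U B S = r → i ∈ S → Tpos i ⊆ S := by
    intro i S hS hiS
    have hmem : S ∈ Finset.univ.filter (fun S => fS U B S = r ∧ i ∈ S) :=
      Finset.mem_filter.2 ⟨Finset.mem_univ _, hS, hiS⟩
    exact Finset.inf_le (f := _root_.id) hmem
  have hTpos_mem : ∀ i, i ∈ Tpos i := by
    intro i
    have : ({i} : Finset (Fin d)) ≤ Tpos i := by
      apply Finset.le_inf
      intro S hS
      simp only [Finset.mem_filter] at hS
      simpa using hS.2.2
    simpa using this
  -- every index is "bad"
  have hbad : ∀ i, U i ≤ (Tneg i).sup U ∨ B i ≤ ((Tpos i)ᶜ).sup B := by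
    intro i
    by_contra hb
    push_neg at hb
    obtain ⟨hU, hB⟩ := hb
    obtain ⟨x, hxU, hx⟩ := SetLike.not_le_iff_exists.1 hU
    obtain ⟨y, hyB, hy⟩ := SetLike.not_le_iff_exists.1 hB
    have hx0 : x ≠ 0 := fun h => hx (h ▸ zero_mem _)
    have hy0 : y ≠ 0 := fun h => hy (h ▸ zero_mem _)
    obtain ⟨S, hSt, hxS, hyS⟩ := hcon i x y hxU hyB hx0 hy0
    by_cases hiS : i ∈ S
    · exact hy (Finset.sup_mono (f := B)
        (Finset.compl_subset_compl.mpr (hTpos_sub i S hSt hiS)) hyS)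
    · exact hx (Finset.sup_mono (f := U) (hTneg_sub i S hSt hiS) hxS)
  -- Lemma A
  have lemA : ∀ i, (∃ S, fS U B S = r ∧ i ∈ S) → U i ≤ (Tneg i).sup U := by
    rintro i ⟨S, hSt, hiS⟩
    rcases hbad i with h | h
    · exact h
    have hne : (Finset.univ.filter (fun T => fS U B T = r ∧ i ∈ T)).Nonempty :=
      ⟨S, Finset.mem_filter.2 ⟨Finset.mem_univ _, hSt, hiS⟩⟩
    have hTt : fS U B (Tpos i) = r := by
      rw [hTpos_def]
      exact inf_tight hmin _ hne (fun T hT => (Finset.mem_filter.1 hT).2.1)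
    have hiT : i ∈ Tpos i := hTpos_mem i
    have hb : (((Tpos i).erase i)ᶜ).sup B = ((Tpos i)ᶜ).sup B := by
      rw [Finset.compl_erase, Finset.sup_insert]
      exact sup_eq_right.2 h
    have hu_le : ((Tpos i).erase i).sup U ≤ (Tpos i).sup U :=
      Finset.sup_mono (Finset.erase_subset _ _)
    have hfe : r ≤ fS U B ((Tpos i).erase i) := hmin _
    have hfin : finrank K ↥((Tpos i).sup U) ≤ finrank K ↥(((Tpos i).erase i).sup U) := by
      have h1 : fS U B ((Tpos i).erase i)
          = finrank K ↥(((Tpos i).erase i).sup U) + finrank K ↥(((Tpos i))ᶜ.sup B) := by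
        rw [fS_def, hb]
      have h2 : fS U B (Tpos i) = finrank K ↥((Tpos i).sup U) + finrank K ↥((Tpos i)ᶜ.sup B) :=
        fS_def _
      omega
    have hequ : ((Tpos i).erase i).sup U = (Tpos i).sup U :=
      Submodule.eq_of_le_of_finrank_le hu_le hfin
    have htight : fS U B ((Tpos i).erase i) = r := by
      rw [fS_def, hb, hequ, ← fS_def]; exact hTt
    have hUi : U i ≤ ((Tpos i).erase i).sup U := by
      rw [hequ]; exact Finset.le_sup hiT
    exact hUi.trans (Finset.sup_mono (hTneg_sub i _ htight (Finset.notMem_erase i _)))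
  -- Lemma A'
  have lemA' : ∀ i, (∃ S, fS U B S = r ∧ i ∉ S) → B i ≤ ((Tpos i)ᶜ).sup B := by
    rintro i ⟨S, hSt, hiS⟩
    rcases hbad i with h | h
    swap
    · exact h
    have hne : (Finset.univ.filter (fun T => fS U B T = r ∧ i ∉ T)).Nonempty :=
      ⟨S, Finset.mem_filter.2 ⟨Finset.mem_univ _, hSt, hiS⟩⟩
    have hTt : fS U B (Tneg i) = r := by
      rw [hTneg_def]
      exact sup_tight hmin _ hne (fun T hT => (Finset.mem_filter.1 hT).2.1)
    have hiT : i ∉ Tneg i := hTneg_not i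
    have hu : ((insert i (Tneg i))).sup U = (Tneg i).sup U := by
      rw [Finset.sup_insert]
      exact sup_eq_right.2 h
    have hb_le : (((insert i (Tneg i)))ᶜ).sup B ≤ ((Tneg i)ᶜ).sup B := by
      rw [Finset.compl_insert]
      exact Finset.sup_mono (Finset.erase_subset _ _)
    have hfe : r ≤ fS U B (insert i (Tneg i)) := hmin _
    have hfin : finrank K ↥(((Tneg i))ᶜ.sup B) ≤ finrank K ↥(((insert i (Tneg i)))ᶜ.sup B) := by
      have h1 : fS U B (insert i (Tneg i))
          = finrank K ↥((Tneg i).sup U) + finrank K ↥(((insert i (Tneg i)))ᶜ.sup B) := by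
        rw [fS_def, hu]
      have h2 : fS U B (Tneg i) = finrank K ↥((Tneg i).sup U) + finrank K ↥((Tneg i)ᶜ.sup B) :=
        fS_def _
      omega
    have heq : ((insert i (Tneg i))ᶜ).sup B = ((Tneg i)ᶜ).sup B :=
      Submodule.eq_of_le_of_finrank_le hb_le hfin
    have htight : fS U B (insert i (Tneg i)) = r := by
      rw [fS_def, hu, heq, ← fS_def]; exact hTt
    have hBi : B i ≤ ((insert i (Tneg i))ᶜ).sup B := by
      rw [heq]
      exact Finset.le_sup (Finset.mem_compl.2 hiT)
    exact hBi.trans (Finset.sup_mono (Finset.compl_subset_compl.mpr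
      (hTpos_sub i _ htight (Finset.mem_insert_self i _))))
  -- Claim C : every tight set has trivial U-span
  have claimC : ∀ n (S : Finset (Fin d)), S.card ≤ n → fS U B S = r → S.sup U = ⊥ := by
    intro n
    induction n with
    | zero =>
        intro S hcard _
        have : S = ∅ := Finset.card_eq_zero.1 (Nat.le_zero.1 hcard)
        simp [this]
    | succ n ih =>
        intro S hcard hSt
        rw [← le_bot_iff]
        apply Finset.sup_le
        intro i hiS
        have hA := lemA i ⟨S, hSt, hiS⟩
        by_cases hne : (Finset.univ.filter (fun T => fS U B T = r ∧ i ∉ T)).Nonempty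
        · have hTt : fS U B (Tneg i) = r := by
            rw [hTneg_def]
            exact sup_tight hmin _ hne (fun T hT => (Finset.mem_filter.1 hT).2.1)
          have hmod := (tight_lattice hmin hSt hTt).2.2.1
          have hUi : U i ≤ (S ∩ Tneg i).sup U := by
            rw [← hmod]
            exact le_inf (Finset.le_sup hiS) hA
          have hss : S ∩ Tneg i ⊂ S := by
            refine Finset.ssubset_iff_subset_ne.2 ⟨Finset.inter_subset_left, ?_⟩
            intro hcontra
            have : i ∈ S ∩ Tneg i := by rw [hcontra]; exact hiS
            exact hTneg_not i (Finset.mem_inter.1 this).2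
          have hcard' : (S ∩ Tneg i).card ≤ n :=
            Nat.lt_succ_iff.1 (lt_of_lt_of_le (Finset.card_lt_card hss) hcard)
          have hbot := ih (S ∩ Tneg i) hcard' (tight_lattice hmin hSt hTt).1
          rw [hbot] at hUi
          exact hUi
        · rw [Finset.not_nonempty_iff_eq_empty] at hne
          rw [hTneg_def] at hA
          simp only [hne, Finset.sup_empty] at hA
          simpa using hA
  -- Claim C' : every tight set has trivial B-span on the complement
  have claimC' : ∀ n (S : Finset (Fin d)), Sᶜ.card ≤ n → fS U B S = r → Sᶜ.sup B = ⊥ := by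
    intro n
    induction n with
    | zero =>
        intro S hcard _
        have : Sᶜ = ∅ := Finset.card_eq_zero.1 (Nat.le_zero.1 hcard)
        simp [this]
    | succ n ih =>
        intro S hcard hSt
        rw [← le_bot_iff]
        apply Finset.sup_le
        intro j hj
        have hjS : j ∉ S := Finset.mem_compl.1 hj
        have hA := lemA' j ⟨S, hSt, hjS⟩
        by_cases hne : (Finset.univ.filter (fun T => fS U B T = r ∧ j ∈ T)).Nonempty
        · have hTt : fS U B (Tpos j) = r := by
            rw [hTpos_def]
            exact inf_tight hmin _ hne (fun T hT => (Finset.mem_filter.1 hT).2.1)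
          have hmod := (tight_lattice hmin hSt hTt).2.2.2
          have hBj : B j ≤ ((S ∪ Tpos j)ᶜ).sup B := by
            rw [← hmod]
            exact le_inf (Finset.le_sup hj) hA
          have hss : (S ∪ Tpos j)ᶜ ⊂ Sᶜ := by
            refine Finset.ssubset_iff_subset_ne.2
              ⟨Finset.compl_subset_compl.2 Finset.subset_union_left, ?_⟩
            intro hcontra
            have : j ∈ (S ∪ Tpos j)ᶜ := by rw [hcontra]; exact hj
            exact (Finset.mem_compl.1 this) (Finset.mem_union_right _ (hTpos_mem j))
          have hcard' : ((S ∪ Tpos j)ᶜ).card ≤ n :=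
            Nat.lt_succ_iff.1 (lt_of_lt_of_le (Finset.card_lt_card hss) hcard)
          have hbot := ih (S ∪ Tpos j) hcard' (tight_lattice hmin hSt hTt).2.1
          rw [hbot] at hBj
          exact hBj
        · rw [Finset.not_nonempty_iff_eq_empty] at hne
          rw [hTpos_def] at hA
          simp only [hne, Finset.inf_empty] at hA
          have : ((⊤ : Finset (Fin d)))ᶜ = ∅ := by simp [Finset.top_eq_univ]
          rw [this] at hA
          simpa using hA
  have h1 := claimC S₀.card S₀ le_rfl hS₀
  have h2 := claimC' S₀ᶜ.card S₀ le_rfl hS₀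
  rw [fS_def, h1, h2] at hS₀
  simp [finrank_bot] at hS₀
  omega

end Selection

/-- Main induction: there is a choice of `P` whose rank attains the min. -/
lemma key : ∀ (N n₁ n₂ : ℕ), n₁ + n₂ = N → ∀ (d : ℕ) (α β : Fin d → ℕ)
    (W : ∀ i, Matrix (Fin n₁) (Fin (α i)) K) (R : ∀ i, Matrix (Fin (β i)) (Fin n₂) K)
    (r : ℕ),
    (∀ S : Finset (Fin d),
      r ≤ fS (fun i => LinearMap.range (W i).mulVecLin)
          (fun i => LinearMap.range ((R i)ᵀ).mulVecLin) S) →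
    ∃ P : ∀ i, Matrix (Fin (α i)) (Fin (β i)) K,
      r ≤ (∑ i, W i * P i * R i).rank := by
  intro N
  induction N using Nat.strong_induction_on with
  | _ N ih =>
    intro n₁ n₂ hN d α β W R r hmin
    classical
    set U : Fin d → Submodule K (Fin n₁ → K) := fun i => LinearMap.range (W i).mulVecLin
      with hU
    set B : Fin d → Submodule K (Fin n₂ → K) := fun i => LinearMap.range ((R i)ᵀ).mulVecLin
      with hB
    -- the actual minimum
    obtain ⟨S₀, -, hS₀min⟩ := Finset.exists_min_image (Finset.univ : Finset (Finset (Fin d)))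
      (fS U B) ⟨∅, Finset.mem_univ _⟩
    set rm := fS U B S₀ with hrm
    have hminrm : ∀ S, rm ≤ fS U B S := fun S => hS₀min S (Finset.mem_univ _)
    have hrle : r ≤ rm := hmin S₀
    rcases Nat.eq_zero_or_pos rm with hrm0 | hrm1
    · exact ⟨fun i => 0, by omega⟩
    -- now rm ≥ 1 : get the dimensions positive
    have hn₁ : 1 ≤ n₁ := by
      have h1 := hminrm Finset.univ
      have h2 : (Finset.univ : Finset (Fin d))ᶜ = ∅ := by simp
      rw [fS_def (U := U) (B := B) Finset.univ, h2] at h1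
      rw [Finset.sup_empty, finrank_bot, add_zero] at h1
      have h3 : finrank K ↥((Finset.univ : Finset (Fin d)).sup U) ≤ n₁ := by
        have := Submodule.finrank_le ((Finset.univ : Finset (Fin d)).sup U)
        simpa [Module.finrank_pi] using this
      omega
    have hn₂ : 1 ≤ n₂ := by
      have h1 := hminrm ∅
      rw [fS_def (U := U) (B := B) ∅] at h1
      rw [Finset.sup_empty, finrank_bot, zero_add] at h1
      have h3 : finrank K ↥(((∅ : Finset (Fin d))ᶜ).sup B) ≤ n₂ := by
        have := Submodule.finrank_le (((∅ : Finset (Fin d))ᶜ).sup B)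
        simpa [Module.finrank_pi] using this
      omega
    obtain ⟨m₁, rfl⟩ : ∃ m, n₁ = m + 1 := ⟨n₁ - 1, by omega⟩
    obtain ⟨m₂, rfl⟩ : ∃ m, n₂ = m + 1 := ⟨n₂ - 1, by omega⟩
    -- selection
    obtain ⟨i, x, y, hxU, hyB, hx0, hy0, hsel⟩ := selection (U := U) (B := B) hminrm (S₀ := S₀) hrm.symm hrm1
    obtain ⟨ξ, hξ⟩ := hxU
    obtain ⟨η, hη⟩ := hyB
    obtain ⟨k₁, hk₁⟩ := Function.ne_iff.1 hx0
    obtain ⟨k₂, hk₂⟩ := Function.ne_iff.1 hy0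
    set Φ := elim x k₁ with hΦ
    set Ψ := (elim y k₂)ᵀ with hΨ
    have hk₁' : x k₁ ≠ 0 := by simpa using hk₁
    have hk₂' : y k₂ ≠ 0 := by simpa using hk₂
    have hkerΦ : LinearMap.ker Φ.mulVecLin = Submodule.span K {x} := ker_elim x k₁ hk₁'
    have hkerΨt : LinearMap.ker (Ψᵀ).mulVecLin = Submodule.span K {y} := by
      rw [hΨ, Matrix.transpose_transpose]; exact ker_elim y k₂ hk₂'
    have hΨy : Matrix.vecMul y Ψ = 0 := by
      have h1 : y ∈ LinearMap.ker (Ψᵀ).mulVecLin := by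
        rw [hkerΨt]; exact Submodule.mem_span_singleton_self y
      have h2 : (Ψᵀ).mulVec y = 0 := h1
      rw [← Matrix.mulVec_transpose]
      exact h2
    -- new data
    set W' : ∀ i, Matrix (Fin m₁) (Fin (α i)) K := fun i => Φ * W i with hW'
    set R' : ∀ i, Matrix (Fin (β i)) (Fin m₂) K := fun i => R i * Ψ with hR'
    -- ranges of new data
    have hU' : ∀ i, LinearMap.range (W' i).mulVecLin = (U i).map Φ.mulVecLin := by
      intro j
      rw [hW', Matrix.mulVecLin_mul, LinearMap.range_comp, hU]
    have hB' : ∀ i, LinearMap.range ((R' i)ᵀ).mulVecLin = (B i).map (Ψᵀ).mulVecLin := by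
      intro j
      rw [hR', Matrix.transpose_mul, Matrix.mulVecLin_mul, LinearMap.range_comp, hB]
    -- min for new data
    have hmin' : ∀ S : Finset (Fin d),
        rm - 1 ≤ fS (fun i => LinearMap.range (W' i).mulVecLin)
          (fun i => LinearMap.range ((R' i)ᵀ).mulVecLin) S := by
      intro S
      have hUS : (S.sup fun i => LinearMap.range (W' i).mulVecLin)
          = (S.sup U).map Φ.mulVecLin := by
        rw [map_finset_sup]
        exact Finset.sup_congr rfl (fun j _ => hU' j)
      have hBS : (Sᶜ.sup fun i => LinearMap.range ((R' i)ᵀ).mulVecLin)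
          = (Sᶜ.sup B).map (Ψᵀ).mulVecLin := by
        rw [map_finset_sup]
        exact Finset.sup_congr rfl (fun j _ => hB' j)
      have dropU := finrank_map_of_ker_span hkerΦ (S.sup U)
      have dropB := finrank_map_of_ker_span hkerΨt (Sᶜ.sup B)
      rw [fS, hUS, hBS]
      by_cases htight : fS U B S = rm
      · rcases hsel S htight with hxS | hyS
        · have e1 := dropU.2.2 hxS
          have e2 := dropB.2.1
          rw [fS] at htight
          omega
        · have e1 := dropU.2.1
          have e2 := dropB.2.2 hyS
          rw [fS] at htight
          omega
      · have h2 : rm + 1 ≤ fS U B S := by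
          have := hminrm S
          omega
        have e1 := dropU.2.1
        have e2 := dropB.2.1
        rw [fS] at h2
        omega
    -- apply induction hypothesis
    obtain ⟨P', hP'⟩ := ih (m₁ + m₂) (by omega) m₁ m₂ rfl d α β W' R' (rm - 1) hmin'
    set T := ∑ j, W j * P' j * R j with hT
    have hsum : ∑ j, W' j * P' j * R' j = Φ * T * Ψ := by
      rw [hT, Matrix.mul_sum, Matrix.sum_mul]
      apply Finset.sum_congr rfl
      intro j _
      rw [hW', hR']
      simp only [Matrix.mul_assoc]
    obtain ⟨c, hc⟩ := perturb T Φ Ψ hx0 hy0 hkerΦ hΨy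
    -- assemble the new P
    set P : ∀ j, Matrix (Fin (α j)) (Fin (β j)) K :=
      Function.update P' i (P' i + c • vecMulVec ξ η) with hP
    refine ⟨P, ?_⟩
    have hfinal : ∑ j, W j * P j * R j = T + c • vecMulVec x y := by
      have hsplit : ∀ j, W j * P j * R j = W j * P' j * R j +
          (if j = i then c • vecMulVec x y else 0) := by
        intro j
        by_cases hj : j = i
        · subst hj
          rw [hP, Function.update_self, if_pos rfl]
          rw [Matrix.mul_add, Matrix.add_mul]
          congr 1
          rw [Matrix.mul_smul, Matrix.smul_mul, mul_vecMulVec_mul]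
          rw [show (W j).mulVec ξ = x from hξ]
          rw [show Matrix.vecMul η (R j) = y from by
            rw [← Matrix.mulVec_transpose]; exact hη]
        · rw [hP, Function.update_of_ne hj, if_neg hj, add_zero]
      rw [Finset.sum_congr rfl (fun j _ => hsplit j), Finset.sum_add_distrib]
      congr 1
      rw [Finset.sum_ite_eq' Finset.univ i (fun _ => c • vecMulVec x y)]
      simp
    rw [hfinal]
    have : rm - 1 ≤ (Φ * T * Ψ).rank := by rw [← hsum]; exact hP'
    omega


section Main
variable {K : Type} [Field K] {d n₁ n₂ : ℕ} {α β : Fin d → ℕ}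
  (W : ∀ i, Matrix (Fin n₁) (Fin (α i)) K)
  (R : ∀ i, Matrix (Fin (β i)) (Fin n₂) K)

/-- rank of the concatenated `W_S` equals the finrank of the sup of column spaces. -/
lemma rank_WS (S : Finset (Fin d)) :
    (Matrix.of fun (a : Fin n₁) (c : (i : S) × Fin (α i.1)) => W c.1 a c.2).rank
      = finrank K ↥(S.sup fun i => LinearMap.range (W i).mulVecLin) := by
  rw [rank_eq_finrank_range, range_concat]

/-- rank of the stacked `R_{Sᶜ}` equals the finrank of the sup of row spaces. -/
lemma rank_RS (S : Finset (Fin d)) :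
    (Matrix.of fun (c : (j : ↥(Sᶜ)) × Fin (β j.1)) (b : Fin n₂) => R c.1 c.2 b).rank
      = finrank K ↥(Sᶜ.sup fun j => LinearMap.range ((R j)ᵀ).mulVecLin) := by
  rw [← Matrix.rank_transpose]
  have h : (Matrix.of fun (c : (j : ↥(Sᶜ)) × Fin (β j.1)) (b : Fin n₂) => R c.1 c.2 b)ᵀ
      = Matrix.of fun (b : Fin n₂) (c : (j : ↥(Sᶜ)) × Fin (β j.1)) => (R c.1)ᵀ b c.2 := rfl
  rw [h, rank_eq_finrank_range, range_concat (fun j => (R j)ᵀ) (Sᶜ)]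

lemma upper_bound (P : ∀ i, Matrix (Fin (α i)) (Fin (β i)) K) (S : Finset (Fin d)) :
    (∑ i, W i * P i * R i).rank ≤
      (Matrix.of fun (a : Fin n₁) (c : (i : S) × Fin (α i.1)) => W c.1 a c.2).rank +
      (Matrix.of fun (c : (j : ↥(Sᶜ)) × Fin (β j.1)) (b : Fin n₂) => R c.1 c.2 b).rank := by
  classical
  have hsplit : ∑ i, W i * P i * R i
      = (∑ i ∈ S, W i * P i * R i) + (∑ i ∈ Sᶜ, W i * P i * R i) :=
    (Finset.sum_add_sum_compl S _).symm
  have h1 : (∑ i ∈ S, W i * P i * R i).rank ≤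
      (Matrix.of fun (a : Fin n₁) (c : (i : S) × Fin (α i.1)) => W c.1 a c.2).rank := by
    rw [rank_WS, rank_eq_finrank_range]
    apply Submodule.finrank_mono
    rintro _ ⟨v, rfl⟩
    rw [Matrix.mulVecLin_apply, sum_mulVec]
    apply Submodule.sum_mem
    intro i hi
    apply Finset.le_sup (f := fun i => LinearMap.range (W i).mulVecLin) hi
    refine ⟨(P i * R i).mulVec v, ?_⟩
    rw [Matrix.mulVecLin_apply, mulVec_mulVec, ← Matrix.mul_assoc]
  have h2 : (∑ i ∈ Sᶜ, W i * P i * R i).rank ≤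
      (Matrix.of fun (c : (j : ↥(Sᶜ)) × Fin (β j.1)) (b : Fin n₂) => R c.1 c.2 b).rank := by
    rw [rank_RS, ← Matrix.rank_transpose, rank_eq_finrank_range]
    apply Submodule.finrank_mono
    rintro _ ⟨v, rfl⟩
    rw [Matrix.mulVecLin_apply, Matrix.transpose_sum, sum_mulVec]
    apply Submodule.sum_mem
    intro i hi
    apply Finset.le_sup (f := fun j => LinearMap.range ((R j)ᵀ).mulVecLin) hi
    refine ⟨((W i * P i)ᵀ).mulVec v, ?_⟩
    rw [Matrix.mulVecLin_apply, mulVec_mulVec, ← Matrix.transpose_mul]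
  calc (∑ i, W i * P i * R i).rank
      = ((∑ i ∈ S, W i * P i * R i) + (∑ i ∈ Sᶜ, W i * P i * R i)).rank := by rw [← hsplit]
    _ ≤ (∑ i ∈ S, W i * P i * R i).rank + (∑ i ∈ Sᶜ, W i * P i * R i).rank := rank_add_le'' _ _
    _ ≤ _ := Nat.add_le_add h1 h2

end Main

end GRaux

/-- the generic rank (maximum over the matrix parameters Pᵢ) of
∑ Wᵢ Pᵢ Rᵢ equals the minimum over S ⊆ {1,…,d} of
rank W_S + rank R_{Sᶜ}, where W_S is the horizontal concatenation of the Wᵢ,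
i ∈ S, and R_{Sᶜ} is the vertical stacking of the Rⱼ, j ∉ S. -/
theorem generic_rank_matrices_eq_min (d n₁ n₂ : ℕ) (α β : Fin d → ℕ)
    (W : ∀ i, Matrix (Fin n₁) (Fin (α i)) ℂ)
    (R : ∀ i, Matrix (Fin (β i)) (Fin n₂) ℂ) :
    (⨆ P : ∀ i, Matrix (Fin (α i)) (Fin (β i)) ℂ,
        (∑ i, W i * P i * R i).rank) =
      ⨅ S : Finset (Fin d),
        ((Matrix.of fun (a : Fin n₁) (c : (i : S) × Fin (α i.1)) =>
            W c.1 a c.2).rank +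
          (Matrix.of fun (c : (j : ↥(Sᶜ)) × Fin (β j.1)) (b : Fin n₂) =>
            R c.1 c.2 b).rank) := by
  apply le_antisymm
  · exact ciSup_le fun P => le_ciInf fun S => GRaux.upper_bound W R P S
  · set g : Finset (Fin d) → ℕ := fun S =>
      (Matrix.of fun (a : Fin n₁) (c : (i : S) × Fin (α i.1)) => W c.1 a c.2).rank +
      (Matrix.of fun (c : (j : ↥(Sᶜ)) × Fin (β j.1)) (b : Fin n₂) => R c.1 c.2 b).rank
      with hg
    have hbridge : ∀ S, g S = GRaux.fS (fun i => LinearMap.range (W i).mulVecLin)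
        (fun i => LinearMap.range ((R i)ᵀ).mulVecLin) S := by
      intro S
      rw [hg]
      simp only
      rw [GRaux.rank_WS, GRaux.rank_RS]
      rfl
    have hmin : ∀ S, (⨅ S', g S') ≤ GRaux.fS (fun i => LinearMap.range (W i).mulVecLin)
        (fun i => LinearMap.range ((R i)ᵀ).mulVecLin) S := by
      intro S
      rw [← hbridge]
      exact ciInf_le (OrderBot.bddBelow _) S
    obtain ⟨P, hP⟩ := GRaux.key (n₁ + n₂) n₁ n₂ rfl d α β W R (⨅ S', g S') hmin
    calc (⨅ S', g S') ≤ (∑ i, W i * P i * R i).rank := hP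
      _ ≤ ⨆ P : ∀ i, Matrix (Fin (α i)) (Fin (β i)) ℂ, (∑ i, W i * P i * R i).rank := by
          refine le_ciSup (f := fun P : ∀ i, Matrix (Fin (α i)) (Fin (β i)) ℂ =>
            (∑ i, W i * P i * R i).rank) ⟨n₁, ?_⟩ P
          rintro _ ⟨Q, rfl⟩
          simpa using Matrix.rank_le_card_height (∑ i, W i * Q i * R i)
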